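/- Suppose a kernel K_α on (ℝⁿ)^{m+1} satisfies the Dini-type smoothness condition |K_α(x, y⃗) − K_α(x', y⃗)| ≤ A (∑_{j=1}^m |x−y_j|)^{α−mn} ω(|x−x'| / ∑_{j=1}^m |x−y_j|) whenever |x−x'| ≤ (1/2) max_j |x−y_j|, where ω is non-decreasing. Then for each k ≥ 1 and 1 < p₀ < ∞, the generalized kernel condition holds with C_k = C·ω(2^{-k}): (∫_{Q(x, 2^{k+2}√(mn)|x−x'|)^m \ Q(x, 2^{k+1}√(mn)|x−x'|)^m} |K_α(x,y⃗) − K_α(x',y⃗)|^{p₀} dy⃗)^{1/p₀} ≤ C ω(2^{-k}) 2^{k(α − mn/p₀')} |x−x'|^{α − mn/p₀'}, with C depending only on m, n, α, p₀, A. -/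

import Mathlib

open MeasureTheory Set ENNReal NNReal

/-- The axis-parallel cube in Euclidean ℝⁿ with center `z` and side length `r`. -/
def cube (n : ℕ) (z : EuclideanSpace ℝ (Fin n)) (r : ℝ) : Set (EuclideanSpace ℝ (Fin n)) :=
  {x | ∀ i, |x i - z i| ≤ r / 2}

set_option maxHeartbeats 1000000

lemma cube_eq_preimage (n : ℕ) (z : EuclideanSpace ℝ (Fin n)) (r : ℝ) :
    cube n z r = ((MeasurableEquiv.toLp 2 (Fin n → ℝ)).symm) ⁻¹'
      (Set.univ.pi fun i => Set.Icc (z i - r/2) (z i + r/2)) := by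
  ext x
  have hxi : ∀ i, ((MeasurableEquiv.toLp 2 (Fin n → ℝ)).symm) x i = x i := fun i => rfl
  simp only [cube, Set.mem_setOf_eq, Set.mem_preimage, Set.mem_pi, Set.mem_univ, true_implies,
    Set.mem_Icc, hxi]
  constructor
  · intro h i
    have := abs_le.1 (h i)
    exact ⟨by linarith [this.1], by linarith [this.2]⟩
  · intro h i
    have := h i
    rw [abs_le]
    exact ⟨by linarith [this.1], by linarith [this.2]⟩

lemma measurableSet_cube (n : ℕ) (z : EuclideanSpace ℝ (Fin n)) (r : ℝ) :
    MeasurableSet (cube n z r) := by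
  rw [cube_eq_preimage]
  exact ((MeasurableEquiv.toLp 2 (Fin n → ℝ)).symm).measurable
    (MeasurableSet.univ_pi fun i => measurableSet_Icc)

lemma volume_cube (n : ℕ) (z : EuclideanSpace ℝ (Fin n)) {r : ℝ} (hr : 0 ≤ r) :
    volume (cube n z r) = ENNReal.ofReal r ^ n := by
  rw [cube_eq_preimage,
    (EuclideanSpace.volume_preserving_symm_measurableEquiv_toLp (Fin n)).measure_preimage
      (MeasurableSet.univ_pi fun i => measurableSet_Icc).nullMeasurableSet,
    volume_pi_pi]
  simp only [Real.volume_Icc, show ∀ i : Fin n, z i + r/2 - (z i - r/2) = r from fun i => by ring]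
  simp

lemma abs_coord_le_dist {n : ℕ} (x y : EuclideanSpace ℝ (Fin n)) (i : Fin n) :
    |x i - y i| ≤ dist x y := by
  rw [EuclideanSpace.dist_eq, ← Real.sqrt_sq_eq_abs]
  apply Real.sqrt_le_sqrt
  calc (x i - y i)^2 = dist (x i) (y i) ^ 2 := by rw [Real.dist_eq, sq_abs]
  _ ≤ ∑ j, dist (x j) (y j) ^ 2 :=
      Finset.single_le_sum (f := fun j => dist (x j) (y j) ^ 2) (fun j _ => sq_nonneg _) (Finset.mem_univ i)

lemma key_alg {A s d p₀ : ℝ} (α : ℝ) (hA : 0 < A) (hs : 0 < s) (hd : 0 < d) (hp₀ : 1 < p₀)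
    (k N : ℕ) (ν : ℝ) (hν : ν = (N:ℝ)) :
    (A * ((2:ℝ)^k * s * d) ^ (α - ν)) ^ p₀ * ((2:ℝ)^(k+2) * s * d) ^ N
      = (A * s ^ (α - ν/(p₀/(p₀-1))) * (4:ℝ) ^ (ν/p₀) * 2 ^ ((k:ℝ)*(α - ν/(p₀/(p₀-1)))) *
          d ^ (α - ν/(p₀/(p₀-1)))) ^ p₀ := by
  subst hν
  have hp0 : (0:ℝ) < p₀ := by linarith
  have hp1 : p₀ - 1 ≠ 0 := by intro h; linarith [sub_eq_zero.1 h]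
  set σ : ℝ := α - (N:ℝ)/(p₀/(p₀-1)) with hσdef
  have hσ : σ * p₀ = (α - (N:ℝ)) * p₀ + (N:ℝ) := by
    rw [hσdef]; field_simp; ring
  have h2k : (0:ℝ) < 2^k := by positivity
  have h2k2 : (0:ℝ) < (2:ℝ)^(k+2) := by positivity
  have hR : (0:ℝ) < (2:ℝ)^k * s * d := by positivity
  have hside : (0:ℝ) < (2:ℝ)^(k+2) * s * d := by positivity
  have hlog4 : Real.log 4 = 2 * Real.log 2 := by
    rw [show (4:ℝ) = 2^2 by norm_num, Real.log_pow]; push_cast; ring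
  apply Real.log_injOn_pos (Set.mem_Ioi.2 (by positivity)) (Set.mem_Ioi.2 (by positivity))
  have hpp : p₀ * ((N:ℝ) / p₀) = (N:ℝ) := by field_simp
  have e1 : Real.log ((2:ℝ)^k * s * d) = k * Real.log 2 + Real.log s + Real.log d := by
    rw [Real.log_mul (by positivity) hd.ne', Real.log_mul (by positivity) hs.ne', Real.log_pow]
  have e2 : Real.log ((2:ℝ)^(k+2) * s * d)
      = ((k:ℝ)+2) * Real.log 2 + Real.log s + Real.log d := by
    rw [Real.log_mul (by positivity) hd.ne', Real.log_mul (by positivity) hs.ne', Real.log_pow]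
    push_cast; ring
  have e3 : Real.log ((A * s ^ σ * 4 ^ ((N:ℝ) / p₀) * 2 ^ ((k:ℝ) * σ) * d ^ σ) ^ p₀)
      = p₀ * (Real.log A + σ * Real.log s + ((N:ℝ)/p₀) * (2 * Real.log 2)
          + ((k:ℝ)*σ) * Real.log 2 + σ * Real.log d) := by
    rw [Real.log_rpow (by positivity), Real.log_mul (by positivity) (by positivity),
      Real.log_mul (by positivity) (by positivity), Real.log_mul (by positivity) (by positivity),
      Real.log_mul hA.ne' (by positivity), Real.log_rpow hs, Real.log_rpow (by norm_num : (0:ℝ) < 4),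
      Real.log_rpow (by norm_num : (0:ℝ) < 2), Real.log_rpow hd, hlog4]
    try ring
  rw [Real.log_mul (by positivity) (by positivity), Real.log_rpow (by positivity),
    Real.log_mul hA.ne' (by positivity), Real.log_rpow hR, Real.log_pow, e1, e2, e3]
  linear_combination (-(((k:ℝ)) * Real.log 2 + Real.log s + Real.log d)) * hσ
    + (-(2*Real.log 2)) * hpp

/-- The Dini-type smoothness condition (1.2) implies the generalized kernel
condition (1.5) with C_k = C ω(2^{-k}). -/
theorem dini_kernel_implies_generalized_kernel
    (n m : ℕ) (hn : 0 < n) (hm : 0 < m) (α A p₀ : ℝ)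
    (hα : 0 < α) (hαmn : α < m * n) (hA : 0 < A) (hp₀ : 1 < p₀)
    (ω : ℝ → ℝ) (hωmono : MonotoneOn ω (Ici 0)) (hωnn : ∀ t, 0 ≤ t → 0 ≤ ω t)
    (K : EuclideanSpace ℝ (Fin n) → (Fin m → EuclideanSpace ℝ (Fin n)) → ℝ)
    (hK : ∀ (x x' : EuclideanSpace ℝ (Fin n)) (y : Fin m → EuclideanSpace ℝ (Fin n)),
      dist x x' ≤ (1/2) *
        (Finset.univ.sup' (Finset.univ_nonempty_iff.mpr (Fin.pos_iff_nonempty.mp hm))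
          fun j => dist x (y j)) →
      |K x y - K x' y| ≤ A * (∑ j, dist x (y j)) ^ (α - m * n) *
        ω (dist x x' / ∑ j, dist x (y j))) :
    ∃ C : ℝ, 0 < C ∧ ∀ k : ℕ, 1 ≤ k →
      ∀ x x' : EuclideanSpace ℝ (Fin n), x ≠ x' →
        (∫⁻ y in {y : Fin m → EuclideanSpace ℝ (Fin n) |
              ∀ j, y j ∈ cube n x (2 ^ (k+2) * Real.sqrt (m*n) * dist x x')} \
            {y : Fin m → EuclideanSpace ℝ (Fin n) |
              ∀ j, y j ∈ cube n x (2 ^ (k+1) * Real.sqrt (m*n) * dist x x')},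
            ENNReal.ofReal (|K x y - K x' y| ^ p₀)) ^ (1/p₀) ≤
          ENNReal.ofReal (C * ω (2 ^ (-(k:ℝ))) *
            2 ^ ((k:ℝ) * (α - m * n / (p₀ / (p₀ - 1)))) *
            dist x x' ^ (α - m * n / (p₀ / (p₀ - 1)))) := by

  have hmn1 : (1:ℝ) ≤ (m:ℝ) * n := by
    have h1 : (1:ℝ) ≤ (m:ℝ) := by exact_mod_cast hm
    have h2 : (1:ℝ) ≤ (n:ℝ) := by exact_mod_cast hn
    nlinarith
  have h20 : (0:ℝ) < 2 := by norm_num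
  set s := Real.sqrt ((m:ℝ) * n) with hs_def
  have hs1 : 1 ≤ s := by
    rw [hs_def, show (1:ℝ) = Real.sqrt 1 from Real.sqrt_one.symm]
    exact Real.sqrt_le_sqrt hmn1
  have hs0 : 0 < s := lt_of_lt_of_le one_pos hs1
  have hp0 : (0:ℝ) < p₀ := by linarith
  set σ : ℝ := α - (m:ℝ) * n / (p₀ / (p₀ - 1)) with hσ_def
  refine ⟨A * s ^ σ * (4:ℝ) ^ ((m:ℝ) * n / p₀),
    mul_pos (mul_pos hA (Real.rpow_pos_of_pos hs0 _)) (Real.rpow_pos_of_pos (by norm_num) _), ?_⟩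
  intro k hk x x' hxx'
  set d := dist x x' with hd_def
  have hd : 0 < d := dist_pos.2 hxx'
  set ω' := ω ((2:ℝ) ^ (-(k:ℝ))) with hω'_def
  have hω'0 : 0 ≤ ω' := hωnn _ (Real.rpow_nonneg h20.le _)
  have ht : α - (m:ℝ) * n ≤ 0 := by linarith
  set R := (2:ℝ)^k * s * d with hR_def
  have hR : 0 < R := mul_pos (mul_pos (pow_pos h20 k) hs0) hd
  set B := A * R ^ (α - (m:ℝ) * n) * ω' with hB_def
  have hB0 : 0 ≤ B :=
    mul_nonneg (mul_nonneg hA.le (Real.rpow_nonneg hR.le _)) hω'0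
  set r₂ : ℝ := 2 ^ (k+2) * s * d with hr2
  set r₁ : ℝ := 2 ^ (k+1) * s * d with hr1
  have hr₂0 : (0:ℝ) ≤ r₂ := (mul_pos (mul_pos (pow_pos h20 _) hs0) hd).le
  have hr12 : r₁ / 2 = R := by rw [hr1, hR_def, pow_succ]; ring
  set O := {y : Fin m → EuclideanSpace ℝ (Fin n) | ∀ j, y j ∈ cube n x r₂} with hO
  set I := {y : Fin m → EuclideanSpace ℝ (Fin n) | ∀ j, y j ∈ cube n x r₁} with hI
  have hOpi : O = Set.univ.pi fun _ : Fin m => cube n x r₂ := by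
    ext y; simp [hO, Set.mem_pi]
  have hOmeas : MeasurableSet O := by
    rw [hOpi]; exact MeasurableSet.univ_pi fun _ => measurableSet_cube n x r₂
  have hImeas : MeasurableSet I := by
    have : I = Set.univ.pi fun _ : Fin m => cube n x r₁ := by ext y; simp [hI, Set.mem_pi]
    rw [this]; exact MeasurableSet.univ_pi fun _ => measurableSet_cube n x r₁
  have h2k : (2:ℝ) ≤ 2^k := by
    calc (2:ℝ) = 2^1 := (pow_one 2).symm
    _ ≤ 2^k := pow_le_pow_right₀ one_le_two hk
  -- pointwise bound on the annulus
  have hpt : ∀ y ∈ O \ I, |K x y - K x' y| ≤ B := by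
    rintro y ⟨-, hyI⟩
    have hEx : ∃ j : Fin m, R ≤ dist x (y j) := by
      by_contra hcon; push_neg at hcon
      refine hyI ?_
      intro j i
      calc |y j i - x i| = |x i - y j i| := abs_sub_comm _ _
      _ ≤ dist x (y j) := abs_coord_le_dist x (y j) i
      _ ≤ r₁ / 2 := by rw [hr12]; exact (hcon j).le
    obtain ⟨j, hj⟩ := hEx
    have hsup : R ≤ Finset.univ.sup'
        (Finset.univ_nonempty_iff.mpr (Fin.pos_iff_nonempty.mp hm))
        (fun j => dist x (y j)) :=
      le_trans hj (Finset.le_sup' (fun j => dist x (y j)) (Finset.mem_univ j))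
    have hsum : R ≤ ∑ j, dist x (y j) := by
      refine le_trans hsup (Finset.sup'_le _ _ fun j _ => ?_)
      exact Finset.single_le_sum (f := fun j => dist x (y j))
        (fun _ _ => dist_nonneg) (Finset.mem_univ j)
    have hsum0 : 0 < ∑ j, dist x (y j) := lt_of_lt_of_le hR hsum
    have h2d : 2 * d ≤ R := by
      have h1' : (2:ℝ) * 1 ≤ 2^k * s := mul_le_mul h2k hs1 zero_le_one (pow_pos h20 k).le
      calc 2 * d = (2 * 1) * d := by ring
      _ ≤ (2^k * s) * d := mul_le_mul_of_nonneg_right h1' hd.le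
      _ = R := by rw [hR_def]
    have hhalf : d ≤ (1/2) * Finset.univ.sup'
        (Finset.univ_nonempty_iff.mpr (Fin.pos_iff_nonempty.mp hm))
        (fun j => dist x (y j)) := by linarith
    refine le_trans (hK x x' y hhalf) ?_
    have hSt : (∑ j, dist x (y j)) ^ (α - (m:ℝ) * n) ≤ R ^ (α - (m:ℝ) * n) :=
      Real.rpow_le_rpow_of_nonpos hR hsum ht
    have hdiv : d / (∑ j, dist x (y j)) ≤ (2:ℝ) ^ (-(k:ℝ)) := by
      have h2neg : (2:ℝ) ^ (-(k:ℝ)) = ((2:ℝ)^k)⁻¹ := by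
        rw [Real.rpow_neg h20.le, Real.rpow_natCast]
      have key : (2:ℝ)^k * d ≤ ∑ j, dist x (y j) := by
        refine le_trans ?_ hsum
        calc (2:ℝ)^k * d = (2^k * 1) * d := by ring
        _ ≤ (2^k * s) * d := by
            refine mul_le_mul_of_nonneg_right ?_ hd.le
            exact mul_le_mul_of_nonneg_left hs1 (pow_pos h20 k).le
        _ = R := by rw [hR_def]
      rw [h2neg, div_le_iff₀ hsum0]
      have hde : d = ((2:ℝ)^k)⁻¹ * ((2:ℝ)^k * d) := by
        rw [← mul_assoc, inv_mul_cancel₀ (pow_pos h20 k).ne', one_mul]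
      rw [hde]
      exact mul_le_mul_of_nonneg_left key (inv_nonneg.2 (pow_pos h20 k).le)
    have hωle : ω (d / ∑ j, dist x (y j)) ≤ ω' := by
      rw [hω'_def]
      exact hωmono (Set.mem_Ici.2 (div_nonneg hd.le hsum0.le))
        (Set.mem_Ici.2 (Real.rpow_nonneg h20.le _)) hdiv
    rw [hB_def]
    exact mul_le_mul (mul_le_mul_of_nonneg_left hSt hA.le) hωle
      (hωnn _ (div_nonneg hd.le hsum0.le))
      (mul_nonneg hA.le (Real.rpow_nonneg hR.le _))
  -- volume of the outer cube power
  have hμO : volume O = ENNReal.ofReal (r₂ ^ (n * m)) := by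
    rw [hOpi, volume_pi_pi]
    simp only [volume_cube n x hr₂0]
    rw [Finset.prod_const, Finset.card_univ, Fintype.card_fin, ← pow_mul,
      ← ENNReal.ofReal_pow hr₂0]
  have hInt : ∫⁻ y in O \ I, ENNReal.ofReal (|K x y - K x' y| ^ p₀)
      ≤ ENNReal.ofReal (B ^ p₀ * r₂ ^ (n * m)) := by
    calc ∫⁻ y in O \ I, ENNReal.ofReal (|K x y - K x' y| ^ p₀)
        ≤ ∫⁻ _ in O \ I, ENNReal.ofReal (B ^ p₀) := by
          refine lintegral_mono_ae ?_
          filter_upwards [ae_restrict_mem (hOmeas.diff hImeas)] with y hy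
          exact ENNReal.ofReal_le_ofReal
            (Real.rpow_le_rpow (abs_nonneg _) (hpt y hy) hp0.le)
      _ = ENNReal.ofReal (B ^ p₀) * volume (O \ I) := setLIntegral_const _ _
      _ ≤ ENNReal.ofReal (B ^ p₀) * volume O :=
          mul_le_mul_right (measure_mono Set.diff_subset) _
      _ = ENNReal.ofReal (B ^ p₀) * ENNReal.ofReal (r₂ ^ (n * m)) := by rw [hμO]
      _ = ENNReal.ofReal (B ^ p₀ * r₂ ^ (n * m)) :=
          (ENNReal.ofReal_mul (Real.rpow_nonneg hB0 _)).symm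
  set X : ℝ := A * s ^ σ * (4:ℝ) ^ ((m:ℝ) * n / p₀) * ω' * 2 ^ ((k:ℝ) * σ) * d ^ σ with hX
  set Y : ℝ := A * s ^ σ * (4:ℝ) ^ ((m:ℝ) * n / p₀) * 2 ^ ((k:ℝ) * σ) * d ^ σ with hY
  have hY0 : 0 ≤ Y :=
    mul_nonneg (mul_nonneg (mul_nonneg (mul_nonneg hA.le (Real.rpow_nonneg hs0.le _))
      (Real.rpow_nonneg (by norm_num) _)) (Real.rpow_nonneg h20.le _))
      (Real.rpow_nonneg hd.le _)
  have hX0 : 0 ≤ X := by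
    rw [hX]
    exact mul_nonneg (mul_nonneg (mul_nonneg (mul_nonneg (mul_nonneg hA.le
      (Real.rpow_nonneg hs0.le _)) (Real.rpow_nonneg (by norm_num) _)) hω'0)
      (Real.rpow_nonneg h20.le _)) (Real.rpow_nonneg hd.le _)
  have halg : B ^ p₀ * r₂ ^ (n * m) = X ^ p₀ := by
    have h1 := key_alg α hA hs0 hd hp₀ k (n * m) ((m:ℝ) * n) (by push_cast; ring)
    rw [← hσ_def, ← hR_def, ← hr2, ← hY] at h1
    have h2 : X ^ p₀ = (Y * ω') ^ p₀ := by
      rw [hX, hY]; congr 1; ring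
    calc B ^ p₀ * r₂ ^ (n * m)
        = (A * R ^ (α - (m:ℝ) * n)) ^ p₀ * ω' ^ p₀ * r₂ ^ (n * m) := by
          rw [hB_def, Real.mul_rpow (mul_nonneg hA.le (Real.rpow_nonneg hR.le _)) hω'0]
      _ = ((A * R ^ (α - (m:ℝ) * n)) ^ p₀ * r₂ ^ (n * m)) * ω' ^ p₀ := by ring
      _ = Y ^ p₀ * ω' ^ p₀ := by rw [h1]
      _ = (Y * ω') ^ p₀ := (Real.mul_rpow hY0 hω'0).symm
      _ = X ^ p₀ := h2.symm
  calc (∫⁻ y in O \ I, ENNReal.ofReal (|K x y - K x' y| ^ p₀)) ^ (1/p₀)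
      ≤ (ENNReal.ofReal (X ^ p₀)) ^ (1/p₀) :=
        ENNReal.rpow_le_rpow (le_trans hInt (le_of_eq (congrArg _ halg)))
          (by positivity)
    _ = ENNReal.ofReal ((X ^ p₀) ^ (1/p₀)) :=
        ENNReal.ofReal_rpow_of_nonneg (Real.rpow_nonneg hX0 _) (by positivity)
    _ = ENNReal.ofReal X := by
        rw [← Real.rpow_mul hX0, mul_one_div_cancel hp0.ne', Real.rpow_one]
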